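/- For every n ≥ 2, the tensor rank of the n-partite W-state W_n = |0...01⟩ + |0...10⟩ + ... + |10...0⟩ in (ℂ²)^{⊗n} equals n. -/

import Mathlib

/-- `T` admits a tensor decomposition with at most `r` elementary tensors. -/
def hasRankLE (n d : ℕ) (T : (Fin n → Fin d) → ℂ) (r : ℕ) : Prop :=
  ∃ v : Fin r → Fin n → Fin d → ℂ, ∀ j, T j = ∑ α, ∏ i, v α i (j i)

/-- The tensor rank of a multipartite tensor. -/
noncomputable def tensorRank (n d : ℕ) (T : (Fin n → Fin d) → ℂ) : ℕ :=
  sInf {r | hasRankLE n d T r}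

/-- The n-partite W-state: entry 1 on multi-indices with exactly one coordinate 1. -/
noncomputable def Wstate (n : ℕ) : (Fin n → Fin 2) → ℂ := fun j =>
  if (Finset.univ.filter (fun i => j i = 1)).card = 1 then 1 else 0

/-- Number of coordinates equal to 1. -/
def Wones {n : ℕ} (j : Fin n → Fin 2) : ℕ := ∑ i, if j i = 1 then 1 else 0

lemma Wstate_eq (n : ℕ) (j : Fin n → Fin 2) :
    Wstate n j = if Wones j = 1 then 1 else 0 := by
  unfold Wstate Wones
  rw [Finset.card_filter]

lemma Wones_eq_zero {n : ℕ} (j : Fin n → Fin 2) :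
    Wones j = 0 ↔ ∀ i, j i = 0 := by
  unfold Wones
  rw [Finset.sum_eq_zero_iff]
  constructor
  · intro h i
    have := h i (Finset.mem_univ i)
    by_cases hj : j i = 1
    · simp [hj] at this
    · omega
  · intro h i _
    have := h i
    simp [this]

lemma Wones_cons {n : ℕ} (a : Fin 2) (t : Fin n → Fin 2) :
    Wones (Fin.cons a t) = (if a = 1 then 1 else 0) + Wones t := by
  unfold Wones
  rw [Fin.sum_univ_succ]
  simp

/-- W plus a multiple of the all-zero elementary tensor. -/
noncomputable def WcAux (n : ℕ) (c : ℂ) : (Fin n → Fin 2) → ℂ := fun j =>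
  (if Wones j = 1 then 1 else 0) + c * (if Wones j = 0 then 1 else 0)

lemma lower_aux (n : ℕ) (hn : 1 ≤ n) :
    ∀ c : ℂ, ∀ r : ℕ, hasRankLE n 2 (WcAux n c) r → n ≤ r := by
  induction n with
  | zero => omega
  | succ m ih =>
    intro c r ⟨v, hv⟩
    -- split off the first tensor factor
    set S : Fin r → (Fin m → Fin 2) → ℂ := fun α t => ∏ i, v α i.succ (t i) with hS
    have hsplit : ∀ (a : Fin 2) (t : Fin m → Fin 2),
        WcAux (m+1) c (Fin.cons a t) = ∑ α, v α 0 a * S α t := by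
      intro a t
      rw [hv (Fin.cons a t)]
      refine Finset.sum_congr rfl fun α _ => ?_
      rw [Fin.prod_univ_succ]
      simp [hS]
    have h0 : ∀ t, WcAux m c t = ∑ α, v α 0 0 * S α t := by
      intro t
      have := hsplit 0 t
      rwa [show WcAux (m+1) c (Fin.cons 0 t) = WcAux m c t by
        unfold WcAux; rw [Wones_cons]; norm_num] at this
    have h1 : ∀ t, (if Wones t = 0 then (1:ℂ) else 0) = ∑ α, v α 0 1 * S α t := by
      intro t
      have := hsplit 1 t
      rwa [show WcAux (m+1) c (Fin.cons 1 t) = (if Wones t = 0 then (1:ℂ) else 0) by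
        unfold WcAux; rw [Wones_cons]; simp] at this
    rcases m with _ | k
    · -- base case n = 1
      by_contra hr
      have hr0 : r = 0 := by omega
      subst hr0
      have := h1 (fun _ => 0)
      simp [Wones] at this
    · -- inductive step n = k + 2
      -- find β with v β 0 1 ≠ 0
      have hne : ∃ β, v β 0 1 ≠ 0 := by
        by_contra h
        push_neg at h
        have := h1 (fun _ => 0)
        simp [Wones, h] at this
      obtain ⟨β, hβ⟩ := hne
      rcases r with _ | s
      · exact β.elim0
      set c' : ℂ := - v β 0 0 / v β 0 1 with hc'
      have hcoefβ : v β 0 0 + c' * v β 0 1 = 0 := by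
        rw [hc', div_mul_cancel₀ _ hβ]; ring
      -- the substituted tensor
      have hkey : ∀ t, WcAux (k+1) (c + c') t =
          ∑ γ : Fin s, (v (β.succAbove γ) 0 0 + c' * v (β.succAbove γ) 0 1)
            * S (β.succAbove γ) t := by
        intro t
        have e1 : WcAux (k+1) (c + c') t =
            ∑ α, (v α 0 0 + c' * v α 0 1) * S α t := by
          have := h0 t
          have h1t := h1 t
          unfold WcAux at this ⊢
          calc (if Wones t = 1 then (1:ℂ) else 0) + (c + c') * (if Wones t = 0 then 1 else 0)
              = ((if Wones t = 1 then (1:ℂ) else 0) + c * (if Wones t = 0 then 1 else 0))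
                + c' * (if Wones t = 0 then 1 else 0) := by ring
            _ = (∑ α, v α 0 0 * S α t) + c' * ∑ α, v α 0 1 * S α t := by rw [this, h1t]
            _ = ∑ α, (v α 0 0 + c' * v α 0 1) * S α t := by
                rw [Finset.mul_sum, ← Finset.sum_add_distrib]
                refine Finset.sum_congr rfl fun α _ => by ring
        rw [e1, Fin.sum_univ_succAbove _ β, hcoefβ, zero_mul, zero_add]
      -- build the smaller decomposition
      have hrank : hasRankLE (k+1) 2 (WcAux (k+1) (c + c')) s := by
        refine ⟨fun γ i x =>
          (if i = 0 then (v (β.succAbove γ) 0 0 + c' * v (β.succAbove γ) 0 1) else 1)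
            * v (β.succAbove γ) i.succ x, fun t => ?_⟩
        rw [hkey t]
        refine Finset.sum_congr rfl fun γ _ => ?_
        rw [Finset.prod_mul_distrib]
        congr 1
        simp
      have := ih (by omega) (c + c') s hrank
      omega

lemma Wstate_eq_WcAux (n : ℕ) : Wstate n = WcAux n 0 := by
  funext j
  rw [Wstate_eq]
  unfold WcAux
  ring

lemma upper_aux (n : ℕ) (hn : 1 ≤ n) : hasRankLE n 2 (Wstate n) n := by
  refine ⟨fun α i k => if i = α then (if k = 1 then 1 else 0) else (if k = 0 then 1 else 0),
    fun j => ?_⟩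
  have hterm : ∀ α : Fin n, (∏ i, if i = α then (if j i = 1 then (1:ℂ) else 0)
      else (if j i = 0 then 1 else 0))
      = if (∀ i, j i = if i = α then 1 else 0) then 1 else 0 := by
    intro α
    calc (∏ i, if i = α then (if j i = 1 then (1:ℂ) else 0) else (if j i = 0 then 1 else 0))
        = ∏ i, if (j i = if i = α then 1 else 0) then (1:ℂ) else 0 := by
          refine Finset.prod_congr rfl fun i _ => ?_
          by_cases h : i = α <;> simp [h]
      _ = if (∀ i, j i = if i = α then 1 else 0) then 1 else 0 := by
          rw [Finset.prod_boole]; simp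
  simp_rw [hterm]
  rw [Finset.sum_boole, Wstate_eq]
  by_cases h : Wones j = 1
  · -- exactly one coordinate is 1; the filter set is a singleton
    have hcard : (Finset.univ.filter (fun i => j i = 1)).card = 1 := by
      rw [Finset.card_filter]; exact h
    obtain ⟨a, ha⟩ := Finset.card_eq_one.mp hcard
    have hja : j a = 1 := by
      have : a ∈ Finset.univ.filter (fun i => j i = 1) := ha ▸ Finset.mem_singleton_self a
      simpa using this
    have hother : ∀ i, i ≠ a → j i = 0 := by
      intro i hi
      have : i ∉ Finset.univ.filter (fun i => j i = 1) := by
        rw [ha]; simpa using hi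
      simp at this
      omega
    have : Finset.univ.filter (fun α : Fin n => ∀ i, j i = if i = α then 1 else 0) = {a} := by
      ext α
      simp only [Finset.mem_filter, Finset.mem_univ, true_and, Finset.mem_singleton]
      constructor
      · intro hα
        by_contra hne
        have := hα a
        rw [if_neg (by exact fun hh => hne hh.symm)] at this
        rw [hja] at this
        exact absurd this (by omega)
      · intro hα i
        subst hα
        by_cases hi : i = α
        · subst hi; simp [hja]
        · simp [hi, hother i hi]
    rw [this, h]
    simp
  · have : Finset.univ.filter (fun α : Fin n => ∀ i, j i = if i = α then 1 else 0) = ∅ := by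
      ext α
      simp only [Finset.mem_filter, Finset.mem_univ, true_and, Finset.notMem_empty,
        iff_false]
      intro hα
      apply h
      unfold Wones
      calc (∑ i, if j i = 1 then 1 else 0)
          = ∑ i, if (if i = α then (1:Fin 2) else 0) = 1 then 1 else 0 := by
            refine Finset.sum_congr rfl fun i _ => by rw [hα i]
        _ = 1 := by simp
    rw [this, if_neg h]
    simp

theorem rank_Wstate (n : ℕ) (hn : 2 ≤ n) : tensorRank n 2 (Wstate n) = n := by
  have hmem : hasRankLE n 2 (Wstate n) n := upper_aux n (by omega)
  have hlow : ∀ r, hasRankLE n 2 (Wstate n) r → n ≤ r := by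
    intro r hr
    rw [Wstate_eq_WcAux] at hr
    exact lower_aux n (by omega) 0 r hr
  exact le_antisymm (Nat.sInf_le hmem) (le_csInf ⟨n, hmem⟩ fun r hr => hlow r hr)
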